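/- For every UCTP poset P on at least 2 elements and every fixed t ≥ 2, sat*([t]^n, P) = Ω(√n) as n → ∞. -/

import Mathlib

open Filter

/-- An induced copy of the poset `P` inside the family `F`. -/
def InducedCopy (P : Type) [PartialOrder P] {α : Type} [PartialOrder α]
    (F : Set α) : Prop :=
  ∃ φ : P → α, Function.Injective φ ∧ (∀ x, φ x ∈ F) ∧ ∀ x y, φ x ≤ φ y ↔ x ≤ y

/-- `F` is induced `P`-free. -/
def PFree (P : Type) [PartialOrder P] {α : Type} [PartialOrder α] (F : Set α) : Prop :=
  ¬ InducedCopy P F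

/-- `F` is induced `P`-free and induced `P`-saturated. -/
def PSaturated (P : Type) [PartialOrder P] {α : Type} [PartialOrder α] (F : Set α) : Prop :=
  PFree P F ∧ ∀ g ∉ F, InducedCopy P (insert g F)

/-- The lifting operator `L_i`, copying coordinate `i` into a new last coordinate. -/
def lift {t n : ℕ} (i : Fin n) (f : Fin n → Fin t) : Fin (n + 1) → Fin t :=
  Fin.snoc f (f i)

/-- The coordinate-dropping operator `D_i`. -/
def drop {t n : ℕ} (i : Fin (n + 1)) (f : Fin (n + 1) → Fin t) : Fin n → Fin t :=
  fun x => f (i.succAbove x)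

/-- Coordinate `i` is separating for `F`. -/
def Separating {t n : ℕ} (F : Set (Fin n → Fin t)) (i : Fin n) : Prop :=
  ∃ f ∈ F, ∃ f' ∈ F, f ≠ f' ∧ (∀ x, x ≠ i → f x ≤ f' x) ∧ f' i < f i

/-- The induced saturation number `sat*([t]^n, P)`. -/
noncomputable def satStar (t n : ℕ) (P : Type) [PartialOrder P] : ℕ :=
  sInf {m | ∃ F : Set (Fin n → Fin t), PSaturated P F ∧ F.ncard = m}

/-- The antichain on `k` elements. -/
def AC (k : ℕ) := Fin k

instance (k : ℕ) : PartialOrder (AC k) where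
  le := Eq
  le_refl _ := rfl
  le_trans _ _ _ h h' := Eq.trans h h'
  le_antisymm _ _ h _ := h

/-- The unique cover twin property. -/
def UCTP (P : Type) [PartialOrder P] : Prop :=
  ∀ x y : P, y ⋖ x → ∃ y', y' ≠ y ∧ y' ≠ x ∧ y' ⋖ x

/-! ### Auxiliary lemmas -/

/-- Existence of a saturated family: take a maximal P-free family. -/
lemma exists_saturated (t n : ℕ) (P : Type) [PartialOrder P] [Fintype P]
    (hP : Nonempty P) : ∃ F : Set (Fin n → Fin t), PSaturated P F := by
  classical
  obtain ⟨F, hF, hmax⟩ := Set.Finite.exists_maximalFor (id : Set (Fin n → Fin t) → _)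
    {F : Set (Fin n → Fin t) | PFree P F} (Set.toFinite _)
    ⟨∅, by rintro ⟨φ, hinj, hmem, hiff⟩; exact Set.notMem_empty _ (hmem hP.some)⟩
  refine ⟨F, hF, fun g hg => ?_⟩
  by_contra hfree
  have h1 : F = insert g F := (Set.subset_insert g F).antisymm (hmax hfree (Set.subset_insert g F))
  exact hg (h1 ▸ Set.mem_insert g F)

section Endgame

variable {t n : ℕ} {P : Type} [PartialOrder P]

/-- Endgame, upward version: `g ∉ F` just above `f₀ ∈ F`, with matching relation
patterns. Together with UCTP and saturation this is contradictory. -/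
lemma endgameA (huctp : UCTP P) {F : Set (Fin n → Fin t)} (hsat : PSaturated P F)
    {f₀ g : Fin n → Fin t} (hf₀ : f₀ ∈ F) (hg : g ∉ F) (hle : f₀ ≤ g)
    (hdown : ∀ f ∈ F, (f ≤ g ↔ f ≤ f₀))
    (hup : ∀ f ∈ F, (g ≤ f ↔ f₀ ≤ f ∧ f ≠ f₀)) : False := by
  classical
  obtain ⟨hfree, hins⟩ := hsat
  obtain ⟨φ, hinj, hmem, hiff⟩ := hins g hg
  have hx : ∃ x₀, φ x₀ = g := by
    by_contra h
    push_neg at h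
    refine hfree ⟨φ, hinj, fun x => ?_, hiff⟩
    rcases Set.mem_insert_iff.mp (hmem x) with h' | h'
    · exact absurd h' (h x)
    · exact h'
  obtain ⟨x₀, hx₀⟩ := hx
  have hmemF : ∀ q, q ≠ x₀ → φ q ∈ F := by
    intro q hq
    rcases Set.mem_insert_iff.mp (hmem q) with h' | h'
    · exact absurd (hinj (h'.trans hx₀.symm)) hq
    · exact h'
  by_cases hq₀ : ∃ q₀, φ q₀ = f₀
  · obtain ⟨q₀, hq₀⟩ := hq₀
    have hne : q₀ ≠ x₀ := by
      intro h
      rw [h, hx₀] at hq₀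
      exact hg (hq₀ ▸ hf₀)
    have hlt : q₀ < x₀ := by
      have h1 : q₀ ≤ x₀ := (hiff q₀ x₀).mp (by rw [hq₀, hx₀]; exact hle)
      exact lt_of_le_of_ne h1 hne
    have hcov : q₀ ⋖ x₀ := by
      refine ⟨hlt, fun q hq1 hq2 => ?_⟩
      have hqx : q ≠ x₀ := ne_of_lt hq2
      have h2 : φ q ≤ g := by rw [← hx₀]; exact (hiff q x₀).mpr hq2.le
      have h3 : φ q ≤ f₀ := (hdown _ (hmemF q hqx)).mp h2
      have h4 : q ≤ q₀ := (hiff q q₀).mp (by rw [hq₀]; exact h3)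
      exact hq1.not_ge h4
    obtain ⟨y', hy'1, hy'2, hy'cov⟩ := huctp x₀ q₀ hcov
    have h5 : φ y' ≤ g := by rw [← hx₀]; exact (hiff y' x₀).mpr hy'cov.1.le
    have h6 : φ y' ≤ f₀ := (hdown _ (hmemF y' hy'2)).mp h5
    have h7 : y' ≤ q₀ := (hiff y' q₀).mp (by rw [hq₀]; exact h6)
    exact hy'cov.2 (lt_of_le_of_ne h7 hy'1) hlt
  · push_neg at hq₀
    apply hfree
    refine ⟨fun q => if q = x₀ then f₀ else φ q, ?_, ?_, ?_⟩
    · intro a b hab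
      by_cases ha : a = x₀ <;> by_cases hb : b = x₀
      · rw [ha, hb]
      · simp only [ha, if_pos, if_neg hb] at hab
        exact absurd hab.symm (hq₀ b)
      · simp only [hb, if_pos, if_neg ha] at hab
        exact absurd hab (hq₀ a)
      · simp only [if_neg ha, if_neg hb] at hab
        exact hinj hab
    · intro x
      by_cases hx : x = x₀
      · simp only [hx, if_pos]; exact hf₀
      · simp only [if_neg hx]; exact hmemF x hx
    · intro a b
      show ((if a = x₀ then f₀ else φ a) ≤ if b = x₀ then f₀ else φ b) ↔ a ≤ b
      by_cases ha : a = x₀ <;> by_cases hb : b = x₀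
      · rw [if_pos ha, if_pos hb, ha, hb]; simp
      · rw [if_pos ha, if_neg hb, ha]
        constructor
        · intro h
          have h1 : g ≤ φ b := (hup _ (hmemF b hb)).mpr ⟨h, fun he => hq₀ b he⟩
          exact (hiff x₀ b).mp (by rw [hx₀]; exact h1)
        · intro h
          have h1 : g ≤ φ b := by rw [← hx₀]; exact (hiff x₀ b).mpr h
          exact le_trans hle h1
      · rw [if_neg ha, if_pos hb, hb]
        constructor
        · intro h
          have h1 : φ a ≤ g := (hdown _ (hmemF a ha)).mpr h
          exact (hiff a x₀).mp (by rw [hx₀]; exact h1)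
        · intro h
          have h1 : φ a ≤ g := by rw [← hx₀]; exact (hiff a x₀).mpr h
          exact (hdown _ (hmemF a ha)).mp h1
      · rw [if_neg ha, if_neg hb]
        exact hiff a b

/-- Endgame, downward version: `g ∉ F` just below `f₀ ∈ F`. -/
lemma endgameB (huctp : UCTP P) {F : Set (Fin n → Fin t)} (hsat : PSaturated P F)
    {f₀ g : Fin n → Fin t} (hf₀ : f₀ ∈ F) (hg : g ∉ F) (hle : g ≤ f₀)
    (hup : ∀ f ∈ F, (g ≤ f ↔ f₀ ≤ f))
    (hdown : ∀ f ∈ F, (f ≤ g ↔ f ≤ f₀ ∧ f ≠ f₀)) : False := by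
  classical
  obtain ⟨hfree, hins⟩ := hsat
  obtain ⟨φ, hinj, hmem, hiff⟩ := hins g hg
  have hx : ∃ x₀, φ x₀ = g := by
    by_contra h
    push_neg at h
    refine hfree ⟨φ, hinj, fun x => ?_, hiff⟩
    rcases Set.mem_insert_iff.mp (hmem x) with h' | h'
    · exact absurd h' (h x)
    · exact h'
  obtain ⟨x₀, hx₀⟩ := hx
  have hmemF : ∀ q, q ≠ x₀ → φ q ∈ F := by
    intro q hq
    rcases Set.mem_insert_iff.mp (hmem q) with h' | h'
    · exact absurd (hinj (h'.trans hx₀.symm)) hq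
    · exact h'
  by_cases hq₀ : ∃ q₀, φ q₀ = f₀
  · obtain ⟨q₀, hq₀⟩ := hq₀
    have hne : q₀ ≠ x₀ := by
      intro h
      rw [h, hx₀] at hq₀
      exact hg (hq₀ ▸ hf₀)
    have hlt : x₀ < q₀ := by
      have h1 : x₀ ≤ q₀ := (hiff x₀ q₀).mp (by rw [hq₀, hx₀]; exact hle)
      exact lt_of_le_of_ne h1 (Ne.symm hne)
    have hcov : x₀ ⋖ q₀ := by
      refine ⟨hlt, fun q hq1 hq2 => ?_⟩
      have hqx : q ≠ x₀ := (ne_of_lt hq1).symm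
      have h2 : g ≤ φ q := by rw [← hx₀]; exact (hiff x₀ q).mpr hq1.le
      have h3 : f₀ ≤ φ q := (hup _ (hmemF q hqx)).mp h2
      have h4 : q₀ ≤ q := (hiff q₀ q).mp (by rw [hq₀]; exact h3)
      exact hq2.not_ge h4
    obtain ⟨y', hy'1, hy'2, hy'cov⟩ := huctp q₀ x₀ hcov
    have hy'x : y' ≠ x₀ := hy'1
    have h5 : φ y' ≤ f₀ := by rw [← hq₀]; exact (hiff y' q₀).mpr hy'cov.1.le
    have h6 : φ y' ≠ f₀ := fun h => hy'2 (hinj (h.trans hq₀.symm))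
    have h7 : φ y' ≤ g := (hdown _ (hmemF y' hy'x)).mpr ⟨h5, h6⟩
    have h8 : y' ≤ x₀ := (hiff y' x₀).mp (by rw [hx₀]; exact h7)
    exact hy'cov.2 (lt_of_le_of_ne h8 hy'x) hlt
  · push_neg at hq₀
    apply hfree
    refine ⟨fun q => if q = x₀ then f₀ else φ q, ?_, ?_, ?_⟩
    · intro a b hab
      by_cases ha : a = x₀ <;> by_cases hb : b = x₀
      · rw [ha, hb]
      · simp only [ha, if_pos, if_neg hb] at hab
        exact absurd hab.symm (hq₀ b)
      · simp only [hb, if_pos, if_neg ha] at hab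
        exact absurd hab (hq₀ a)
      · simp only [if_neg ha, if_neg hb] at hab
        exact hinj hab
    · intro x
      by_cases hx : x = x₀
      · simp only [hx, if_pos]; exact hf₀
      · simp only [if_neg hx]; exact hmemF x hx
    · intro a b
      show ((if a = x₀ then f₀ else φ a) ≤ if b = x₀ then f₀ else φ b) ↔ a ≤ b
      by_cases ha : a = x₀ <;> by_cases hb : b = x₀
      · rw [if_pos ha, if_pos hb, ha, hb]; simp
      · rw [if_pos ha, if_neg hb, ha]
        constructor
        · intro h
          have h1 : g ≤ φ b := le_trans hle h
          exact (hiff x₀ b).mp (by rw [hx₀]; exact h1)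
        · intro h
          have h1 : g ≤ φ b := by rw [← hx₀]; exact (hiff x₀ b).mpr h
          exact (hup _ (hmemF b hb)).mp h1
      · rw [if_neg ha, if_pos hb, hb]
        constructor
        · intro h
          have h1 : φ a ≤ g := (hdown _ (hmemF a ha)).mpr ⟨h, hq₀ a⟩
          exact (hiff a x₀).mp (by rw [hx₀]; exact h1)
        · intro h
          have h1 : φ a ≤ g := by rw [← hx₀]; exact (hiff a x₀).mpr h
          exact le_trans h1 hle
      · rw [if_neg ha, if_neg hb]
        exact hiff a b

end Endgame

/-- For a UCTP poset, every coordinate of a saturated family is separating. -/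
lemma every_coord_sep {t n : ℕ} (ht : 2 ≤ t) {P : Type} [PartialOrder P] [Fintype P]
    (hcard : 2 ≤ Fintype.card P) (huctp : UCTP P)
    {F : Set (Fin n → Fin t)} (hsat : PSaturated P F) (i : Fin n) : Separating F i := by
  classical
  by_contra hns
  -- non-separating key property
  have hkey : ∀ f ∈ F, ∀ f' ∈ F, (∀ x, x ≠ i → f x ≤ f' x) → f i ≤ f' i := by
    intro f hf f' hf' hx
    by_cases hne : f = f'
    · rw [hne]
    · by_contra hlt
      exact hns ⟨f, hf, f', hf', hne, hx, lt_of_not_ge hlt⟩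
  -- F is nonempty
  have hFne : F.Nonempty := by
    rw [Set.nonempty_iff_ne_empty]
    intro hFe
    have hg : (fun _ : Fin n => (⟨0, by omega⟩ : Fin t)) ∉ F := by rw [hFe]; exact id
    obtain ⟨φ, hinj, hmem, _⟩ := hsat.2 _ hg
    obtain ⟨p₁, p₂, hp⟩ := Fintype.exists_pair_of_one_lt_card (α := P) (by omega)
    apply hp
    apply hinj
    have h1 := hmem p₁
    have h2 := hmem p₂
    rw [hFe] at h1 h2
    simp only [Set.mem_insert_iff, Set.mem_empty_iff_false, or_false] at h1 h2
    rw [h1, h2]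
  by_cases hex : ∃ f ∈ F, (f i : ℕ) + 1 < t
  · -- upward case
    obtain ⟨f₁, hf₁, hf₁i⟩ := hex
    obtain ⟨f₀, hf₀L, hf₀max⟩ := Set.Finite.exists_maximalFor
      (id : (Fin n → Fin t) → _) {f ∈ F | f i = f₁ i} (Set.toFinite _) ⟨f₁, hf₁, rfl⟩
    obtain ⟨hf₀F, hf₀i⟩ := hf₀L
    have hci : (f₀ i : ℕ) + 1 < t := by rw [hf₀i]; exact hf₁i
    set g := Function.update f₀ i ⟨(f₀ i : ℕ) + 1, hci⟩ with hgdef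
    have hgi : (g i : ℕ) = (f₀ i : ℕ) + 1 := by
      simp [hgdef, Function.update_apply]
    have hgx : ∀ x, x ≠ i → g x = f₀ x := by
      intro x hx
      simp [hgdef, Function.update_apply, hx]
    have hf₀g : f₀ ≤ g := by
      intro x
      by_cases hx : x = i
      · rw [hx]
        rw [Fin.le_def, hgi]
        omega
      · rw [hgx x hx]
    have hfgi : f₀ i < g i := by rw [Fin.lt_def, hgi]; omega
    have hgF : g ∉ F := by
      intro hgF
      refine hns ⟨g, hgF, f₀, hf₀F, ?_, fun x hx => (hgx x hx).le, hfgi⟩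
      intro h
      rw [h] at hfgi
      exact lt_irrefl _ hfgi
    have hdown : ∀ f ∈ F, (f ≤ g ↔ f ≤ f₀) := by
      intro f hf
      constructor
      · intro h
        have hoff : ∀ x, x ≠ i → f x ≤ f₀ x := fun x hx => (hgx x hx) ▸ h x
        have hi := hkey f hf f₀ hf₀F hoff
        intro x
        by_cases hx : x = i
        · rw [hx]; exact hi
        · exact hoff x hx
      · intro h
        exact le_trans h hf₀g
    have hup : ∀ f ∈ F, (g ≤ f ↔ f₀ ≤ f ∧ f ≠ f₀) := by
      intro f hf
      constructor
      · intro h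
        constructor
        · exact le_trans hf₀g h
        · intro heq
          subst heq
          exact absurd (h i) (not_le.mpr hfgi)
      · rintro ⟨h1, h2⟩
        intro x
        by_cases hx : x = i
        · rw [hx]
          rw [Fin.le_def, hgi]
          have hle1 : (f₀ i : ℕ) ≤ (f i : ℕ) := h1 i
          rcases Nat.lt_or_ge (f₀ i : ℕ) (f i : ℕ) with h3 | h3
          · omega
          · exfalso
            apply h2
            have hmem2 : f ∈ {f | f ∈ F ∧ f i = f₁ i} :=
              ⟨hf, by apply Fin.ext; rw [← hf₀i]; omega⟩
            exact le_antisymm (hf₀max hmem2 h1) h1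
        · rw [hgx x hx]
          exact h1 x
    exact endgameA huctp hsat hf₀F hgF hf₀g hdown hup
  · -- downward case: all members have top value at coordinate i
    push_neg at hex
    have hall : ∀ f ∈ F, (f i : ℕ) = t - 1 := by
      intro f hf
      have h1 := hex f hf
      have h2 := (f i).isLt
      omega
    obtain ⟨f₀, hf₀F, hf₀min⟩ := Set.Finite.exists_minimalFor
      (id : (Fin n → Fin t) → _) F (Set.toFinite _) hFne
    have hc1 : 1 ≤ (f₀ i : ℕ) := by
      have := hall f₀ hf₀F
      omega
    set g := Function.update f₀ i ⟨(f₀ i : ℕ) - 1, by have := (f₀ i).isLt; omega⟩ with hgdef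
    have hgi : (g i : ℕ) = (f₀ i : ℕ) - 1 := by
      simp [hgdef, Function.update_apply]
    have hgx : ∀ x, x ≠ i → g x = f₀ x := by
      intro x hx
      simp [hgdef, Function.update_apply, hx]
    have hgf₀ : g ≤ f₀ := by
      intro x
      by_cases hx : x = i
      · rw [hx]
        rw [Fin.le_def, hgi]
        omega
      · rw [hgx x hx]
    have hfgi : g i < f₀ i := by rw [Fin.lt_def, hgi]; omega
    have hgF : g ∉ F := by
      intro hgF
      refine hns ⟨f₀, hf₀F, g, hgF, ?_, fun x hx => (hgx x hx).ge, hfgi⟩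
      intro h
      rw [h] at hfgi
      exact lt_irrefl _ hfgi
    have hup : ∀ f ∈ F, (g ≤ f ↔ f₀ ≤ f) := by
      intro f hf
      constructor
      · intro h
        intro x
        by_cases hx : x = i
        · rw [hx]
          rw [Fin.le_def, hall f hf, hall f₀ hf₀F]
        · rw [← hgx x hx]
          exact h x
      · intro h
        exact le_trans hgf₀ h
    have hdown : ∀ f ∈ F, (f ≤ g ↔ f ≤ f₀ ∧ f ≠ f₀) := by
      intro f hf
      constructor
      · intro h
        exfalso
        have h1 : (f i : ℕ) ≤ (g i : ℕ) := h i
        rw [hgi] at h1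
        have h2 := hall f hf
        have h3 := hall f₀ hf₀F
        omega
      · rintro ⟨h1, h2⟩
        exfalso
        exact h2 (le_antisymm h1 (hf₀min hf h1))
    exact endgameB huctp hsat hf₀F hgF hgf₀ hup hdown

/-- Counting: if every coordinate is separating then `n ≤ |F|²`. -/
lemma card_bound {t n : ℕ} {F : Set (Fin n → Fin t)}
    (hF : ∀ i : Fin n, Separating F i) : n ≤ F.ncard * F.ncard := by
  classical
  choose f hf f' hf' hprop using hF
  have hWinj : Function.Injective
      (fun i : Fin n => ((⟨f i, hf i⟩ : F), (⟨f' i, hf' i⟩ : F))) := by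
    intro i j hij
    by_contra hne
    have h1 : f i = f j := congrArg (fun p => (p.1 : Fin n → Fin t)) hij
    have h2 : f' i = f' j := congrArg (fun p => (p.2 : Fin n → Fin t)) hij
    have h3 := (hprop j).2.1 i (fun h => hne h)
    rw [← h1, ← h2] at h3
    exact absurd h3 (not_le.mpr (hprop i).2.2)
  have h4 : Nat.card (Fin n) ≤ Nat.card (F × F) :=
    Nat.card_le_card_of_injective _ hWinj
  rw [Nat.card_prod, Nat.card_eq_fintype_card, Fintype.card_fin,
    Nat.card_coe_set_eq] at h4
  exact h4

theorem stmt8 (t : ℕ) (ht : 2 ≤ t) (P : Type) [PartialOrder P] [Fintype P]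
    (hcard : 2 ≤ Fintype.card P) (huctp : UCTP P) :
    ∃ c : ℝ, 0 < c ∧ ∀ᶠ n : ℕ in atTop, c * Real.sqrt n ≤ (satStar t n P : ℝ) := by
  refine ⟨1, one_pos, Filter.Eventually.of_forall fun n => ?_⟩
  have hP : Nonempty P := Fintype.card_pos_iff.mp (by omega)
  have hne : {m | ∃ F : Set (Fin n → Fin t), PSaturated P F ∧ F.ncard = m}.Nonempty := by
    obtain ⟨F, hF⟩ := exists_saturated t n P hP
    exact ⟨F.ncard, F, hF, rfl⟩
  obtain ⟨F, hFsat, hFcard⟩ := Nat.sInf_mem hne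
  have hsep : ∀ i : Fin n, Separating F i := every_coord_sep ht hcard huctp hFsat
  have hn : n ≤ F.ncard * F.ncard := card_bound hsep
  have hs : satStar t n P = F.ncard := hFcard.symm
  rw [one_mul, hs]
  have h1 : (n : ℝ) ≤ (F.ncard : ℝ) * (F.ncard : ℝ) := by
    exact_mod_cast hn
  calc Real.sqrt n ≤ Real.sqrt ((F.ncard : ℝ) * (F.ncard : ℝ)) := Real.sqrt_le_sqrt h1
    _ = F.ncard := Real.sqrt_mul_self (by positivity)
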